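/- Scale mixtures of the Laplace distribution are identifiable: let Λ be a standard Laplace random variable, and let Y and Y' be nonnegative random variables such that Y is independent of Λ and Y' is independent of Λ. If the products Λ·Y and Λ·Y' have the same distribution, then Y and Y' have the same distribution. -/

import Mathlib

open MeasureTheory ProbabilityTheory Filter Set
open scoped Topology ENNReal unitInterval


lemma norm_cexp_I_mul_real (r : ℝ) : ‖Complex.exp (Complex.I * (r : ℂ))‖ = 1 := by
  rw [Complex.norm_exp]
  simp [Complex.mul_re]

lemma char_prod
    {Ω : Type*} [MeasurableSpace Ω] (P : Measure Ω) [IsProbabilityMeasure P]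
    (L Z : Ω → ℝ) (hLm : Measurable L) (hZm : Measurable Z)
    (hL : ∀ t : ℝ,
      ∫ ω, Complex.exp (Complex.I * ((t * L ω : ℝ) : ℂ)) ∂P = (((1 + t ^ 2)⁻¹ : ℝ) : ℂ))
    (hindep : IndepFun L Z P) (t : ℝ) :
    ∫ ω, Complex.exp (Complex.I * ((t * (L ω * Z ω) : ℝ) : ℂ)) ∂P
      = ((∫ ω, (1 + t ^ 2 * Z ω ^ 2)⁻¹ ∂P : ℝ) : ℂ) := by
  have hmap : P.map (fun ω => (L ω, Z ω)) = (P.map L).prod (P.map Z) :=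
    (indepFun_iff_map_prod_eq_prod_map_map hLm.aemeasurable hZm.aemeasurable).mp hindep
  have hmeas : Measurable (fun ω => (L ω, Z ω)) := hLm.prodMk hZm
  have hcont : Continuous (fun p : ℝ × ℝ => Complex.exp (Complex.I * ((t * (p.1 * p.2) : ℝ) : ℂ))) := by
    fun_prop
  have h1 : ∫ ω, Complex.exp (Complex.I * ((t * (L ω * Z ω) : ℝ) : ℂ)) ∂P
      = ∫ p : ℝ × ℝ, Complex.exp (Complex.I * ((t * (p.1 * p.2) : ℝ) : ℂ))
          ∂((P.map L).prod (P.map Z)) := by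
    rw [← hmap, integral_map hmeas.aemeasurable hcont.aestronglyMeasurable]
  have hint : Integrable (fun p : ℝ × ℝ => Complex.exp (Complex.I * ((t * (p.1 * p.2) : ℝ) : ℂ)))
      ((P.map L).prod (P.map Z)) := by
    have : IsProbabilityMeasure (P.map L) := Measure.isProbabilityMeasure_map hLm.aemeasurable
    have : IsProbabilityMeasure (P.map Z) := Measure.isProbabilityMeasure_map hZm.aemeasurable
    refine Integrable.mono' (integrable_const 1) hcont.aestronglyMeasurable ?_
    filter_upwards with p
    rw [norm_cexp_I_mul_real]
  have h2 : ∫ p : ℝ × ℝ, Complex.exp (Complex.I * ((t * (p.1 * p.2) : ℝ) : ℂ))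
          ∂((P.map L).prod (P.map Z))
      = ∫ y, ∫ l, Complex.exp (Complex.I * ((t * (l * y) : ℝ) : ℂ)) ∂(P.map L) ∂(P.map Z) := by
    exact MeasureTheory.integral_prod_symm _ hint
  have h3 : ∀ y : ℝ, ∫ l, Complex.exp (Complex.I * ((t * (l * y) : ℝ) : ℂ)) ∂(P.map L)
      = (((1 + (t * y) ^ 2)⁻¹ : ℝ) : ℂ) := by
    intro y
    have : ∫ l, Complex.exp (Complex.I * ((t * (l * y) : ℝ) : ℂ)) ∂(P.map L)
        = ∫ ω, Complex.exp (Complex.I * (((t * y) * L ω : ℝ) : ℂ)) ∂P := by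
      rw [integral_map hLm.aemeasurable (Continuous.aestronglyMeasurable (by fun_prop))]
      congr 1; funext ω; congr 2; push_cast; ring
    rw [this, hL (t * y)]
  have h4 : ∫ y, ∫ l, Complex.exp (Complex.I * ((t * (l * y) : ℝ) : ℂ)) ∂(P.map L) ∂(P.map Z)
      = ((∫ y, (1 + (t * y) ^ 2)⁻¹ ∂(P.map Z) : ℝ) : ℂ) := by
    simp_rw [h3]
    exact integral_ofReal
  have hcy : Continuous (fun y : ℝ => (1 + (t * y) ^ 2)⁻¹) := by
    apply Continuous.inv₀ (by fun_prop)
    intro y; positivity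
  rw [h1, h2, h4]
  norm_cast
  rw [integral_map hZm.aemeasurable hcy.aestronglyMeasurable]
  congr 1; funext ω; ring_nf

noncomputable section LaplaceSW

lemma lap_den_pos {s : ℝ} (hs : 0 < s) {u : ℝ} (hu0 : 0 ≤ u) (hu1 : u ≤ 1) :
    0 < 1 + (s - 1) * u := by
  rcases le_or_gt 1 s with h | h
  · nlinarith
  · nlinarith

/-- the two-variable continuous map -/
def lapEE : C({s : ℝ // 0 < s} × I, ℝ) :=
  ⟨fun p => (1 - (p.2 : ℝ)) / (1 + ((p.1 : ℝ) - 1) * (p.2 : ℝ)), by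
    apply Continuous.div (by fun_prop) (by fun_prop)
    rintro ⟨s, u⟩
    exact (lap_den_pos s.2 u.2.1 u.2.2).ne'⟩

def lapE : C({s : ℝ // 0 < s}, C(I, ℝ)) := ContinuousMap.curry lapEE

lemma lapE_apply (s : {s : ℝ // 0 < s}) (u : I) :
    lapE s u = (1 - (u : ℝ)) / (1 + ((s : ℝ) - 1) * (u : ℝ)) := rfl

/-- span of the generators -/
def lapS : Submodule ℝ C(I, ℝ) := Submodule.span ℝ (insert 1 (Set.range lapE))

lemma lapE_mul_lapE {s t : {s : ℝ // 0 < s}} (hst : (s : ℝ) ≠ (t : ℝ)) :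
    lapE s * lapE t = ((s : ℝ) / ((s : ℝ) - t)) • lapE s + ((t : ℝ) / ((t : ℝ) - s)) • lapE t := by
  ext u
  have h1 : (0:ℝ) < 1 + ((s : ℝ) - 1) * u := lap_den_pos s.2 u.2.1 u.2.2
  have h2 : (0:ℝ) < 1 + ((t : ℝ) - 1) * u := lap_den_pos t.2 u.2.1 u.2.2
  have h3 : (s : ℝ) - t ≠ 0 := sub_ne_zero.mpr hst
  have h4 : (t : ℝ) - s ≠ 0 := sub_ne_zero.mpr (Ne.symm hst)
  simp only [ContinuousMap.mul_apply, ContinuousMap.add_apply, ContinuousMap.smul_apply,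
    lapE_apply, smul_eq_mul]
  rw [div_mul_div_comm, div_mul_div_comm, div_mul_div_comm, div_add_div _ _ (mul_ne_zero h3 h1.ne') (mul_ne_zero h4 h2.ne'), div_eq_div_iff (mul_ne_zero h1.ne' h2.ne') (mul_ne_zero (mul_ne_zero h3 h1.ne') (mul_ne_zero h4 h2.ne'))]
  ring

lemma lapE_mem (s : {s : ℝ // 0 < s}) : lapE s ∈ lapS :=
  Submodule.subset_span (Set.mem_insert_of_mem _ (Set.mem_range_self s))

lemma one_mem_lapS : (1 : C(I, ℝ)) ∈ lapS :=
  Submodule.subset_span (Set.mem_insert _ _)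

lemma lapE_mul_lapE_mem {s t : {s : ℝ // 0 < s}} (hst : (s : ℝ) ≠ (t : ℝ)) :
    lapE s * lapE t ∈ lapS := by
  rw [lapE_mul_lapE hst]
  exact Submodule.add_mem _ (Submodule.smul_mem _ _ (lapE_mem s))
    (Submodule.smul_mem _ _ (lapE_mem t))

lemma lapE_sq_mem (s : {s : ℝ // 0 < s}) :
    lapE s * lapE s ∈ lapS.topologicalClosure := by
  set tn : ℕ → {s : ℝ // 0 < s} := fun n => ⟨(s : ℝ) + 1 / (n + 1), by have hs := s.2; positivity⟩ with htn
  have hseq : Tendsto tn atTop (𝓝 s) := by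
    rw [tendsto_subtype_rng]
    have := tendsto_one_div_add_atTop_nhds_zero_nat (𝕜 := ℝ)
    simpa [htn] using (tendsto_const_nhds : Tendsto (fun _ : ℕ => (s : ℝ)) atTop (𝓝 (s : ℝ))).add this
  have h2 : Tendsto (fun n => lapE s * lapE (tn n)) atTop (𝓝 (lapE s * lapE s)) :=
    (tendsto_const_nhds.mul ((lapE.continuous.tendsto s).comp hseq))
  refine lapS.isClosed_topologicalClosure.mem_of_tendsto h2 ?_
  filter_upwards with n
  refine lapS.le_topologicalClosure (lapE_mul_lapE_mem ?_)
  have hpos : (0:ℝ) < 1 / ((n : ℝ) + 1) := by positivity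
  show (s : ℝ) ≠ (s : ℝ) + 1 / ((n : ℝ) + 1)
  exact ne_of_lt (by linarith)

lemma lapE_mul_mem_of_mem (s : {s : ℝ // 0 < s}) {f : C(I, ℝ)}
    (hf : f ∈ lapS.topologicalClosure) : lapE s * f ∈ lapS.topologicalClosure := by
  have h1 : ∀ g ∈ lapS, lapE s * g ∈ lapS.topologicalClosure := by
    intro g hg
    induction hg using Submodule.span_induction with
    | mem x hx =>
      rcases hx with rfl | ⟨t, rfl⟩
      · rw [mul_one]; exact lapS.le_topologicalClosure (lapE_mem s)
      · rcases eq_or_ne ((s : ℝ)) ((t : ℝ)) with h | h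
        · have : s = t := Subtype.ext h
          subst this
          exact lapE_sq_mem s
        · exact lapS.le_topologicalClosure (lapE_mul_lapE_mem h)
    | zero => rw [mul_zero]; exact Submodule.zero_mem _
    | add x y hx hy ihx ihy => rw [mul_add]; exact Submodule.add_mem _ ihx ihy
    | smul a x hx ihx => rw [mul_smul_comm]; exact Submodule.smul_mem _ _ ihx
  have hcl : f ∈ closure (lapS : Set C(I, ℝ)) := hf
  have himg : lapE s * f ∈ (fun g => lapE s * g) '' closure (lapS : Set C(I, ℝ)) :=
    ⟨f, hcl, rfl⟩
  have h3 := image_closure_subset_closure_image (f := fun g => lapE s * g)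
    (s := (lapS : Set C(I, ℝ))) (continuous_mul_left (lapE s))
  have h4 : closure ((fun g => lapE s * g) '' (lapS : Set C(I, ℝ)))
      ⊆ closure (lapS.topologicalClosure : Set C(I, ℝ)) := by
    apply closure_mono
    rintro _ ⟨g, hg, rfl⟩
    exact h1 g hg
  have h5 : closure (lapS.topologicalClosure : Set C(I, ℝ))
      = (lapS.topologicalClosure : Set C(I, ℝ)) :=
    lapS.isClosed_topologicalClosure.closure_eq
  exact (h5 ▸ h4) (h3 himg)

lemma mul_mem_lapC {f g : C(I, ℝ)} (hf : f ∈ lapS.topologicalClosure)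
    (hg : g ∈ lapS.topologicalClosure) : f * g ∈ lapS.topologicalClosure := by
  have h1 : ∀ p ∈ lapS, p * g ∈ lapS.topologicalClosure := by
    intro p hp
    induction hp using Submodule.span_induction with
    | mem x hx =>
      rcases hx with rfl | ⟨t, rfl⟩
      · rw [one_mul]; exact hg
      · exact lapE_mul_mem_of_mem t hg
    | zero => rw [zero_mul]; exact Submodule.zero_mem _
    | add x y hx hy ihx ihy => rw [add_mul]; exact Submodule.add_mem _ ihx ihy
    | smul a x hx ihx => rw [smul_mul_assoc]; exact Submodule.smul_mem _ _ ihx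
  have hcl : f ∈ closure (lapS : Set C(I, ℝ)) := hf
  have himg : f * g ∈ (fun p => p * g) '' closure (lapS : Set C(I, ℝ)) := ⟨f, hcl, rfl⟩
  have h3 := image_closure_subset_closure_image (f := fun p => p * g)
    (s := (lapS : Set C(I, ℝ))) (continuous_mul_right g)
  have h4 : closure ((fun p => p * g) '' (lapS : Set C(I, ℝ)))
      ⊆ closure (lapS.topologicalClosure : Set C(I, ℝ)) := by
    apply closure_mono
    rintro _ ⟨p, hp, rfl⟩
    exact h1 p hp
  have h5 : closure (lapS.topologicalClosure : Set C(I, ℝ))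
      = (lapS.topologicalClosure : Set C(I, ℝ)) :=
    lapS.isClosed_topologicalClosure.closure_eq
  exact (h5 ▸ h4) (h3 himg)

lemma lapS_dense : lapS.topologicalClosure = ⊤ := by
  have hA : ∀ f ∈ Algebra.adjoin ℝ (Set.range lapE), f ∈ lapS.topologicalClosure := by
    intro f hf
    induction hf using Algebra.adjoin_induction with
    | mem x hx =>
      rcases hx with ⟨t, rfl⟩
      exact lapS.le_topologicalClosure (lapE_mem t)
    | algebraMap r =>
      rw [Algebra.algebraMap_eq_smul_one]
      exact Submodule.smul_mem _ _ (lapS.le_topologicalClosure one_mem_lapS)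
    | add x y hx hy ihx ihy => exact Submodule.add_mem _ ihx ihy
    | mul x y hx hy ihx ihy => exact mul_mem_lapC ihx ihy
  have hsep : (Algebra.adjoin ℝ (Set.range lapE)).SeparatesPoints := by
    intro u v huv
    refine ⟨_, ⟨lapE ⟨1, one_pos⟩, Algebra.subset_adjoin (Set.mem_range_self _), rfl⟩, ?_⟩
    simp only [lapE_apply]
    norm_num
    intro h
    exact huv (Subtype.ext (by linarith))
  have htop := ContinuousMap.subalgebra_topologicalClosure_eq_top_of_separatesPoints
    (Algebra.adjoin ℝ (Set.range lapE)) hsep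
  rw [eq_top_iff]
  rintro f -
  have hmem : f ∈ (Algebra.adjoin ℝ (Set.range lapE)).topologicalClosure := by
    rw [htop]; trivial
  have hcl : f ∈ closure ((Algebra.adjoin ℝ (Set.range lapE)) : Set C(I, ℝ)) := hmem
  have : closure ((Algebra.adjoin ℝ (Set.range lapE)) : Set C(I, ℝ))
      ⊆ (lapS.topologicalClosure : Set C(I, ℝ)) :=
    closure_minimal (fun x hx => hA x hx) lapS.isClosed_topologicalClosure
  exact this hcl

end LaplaceSW


noncomputable section LaplaceAux

def psiI (x : ℝ) : I :=
  ⟨x ^ 2 / (1 + x ^ 2), by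
    constructor
    · positivity
    · rw [div_le_one (by positivity)]
      nlinarith⟩

lemma psiI_continuous : Continuous psiI := by
  apply Continuous.subtype_mk
  apply Continuous.div (by fun_prop) (by fun_prop)
  intro x; positivity


lemma lapE_comp_psiI (s : {s : ℝ // 0 < s}) (x : ℝ) :
    lapE s (psiI x) = (1 + (s : ℝ) * x ^ 2)⁻¹ := by
  rw [lapE_apply]
  show (1 - x ^ 2 / (1 + x ^ 2)) / (1 + ((s : ℝ) - 1) * (x ^ 2 / (1 + x ^ 2)))
      = (1 + (s : ℝ) * x ^ 2)⁻¹
  have h1 : (0:ℝ) < 1 + x ^ 2 := by positivity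
  have h2 : (0:ℝ) < 1 + (s : ℝ) * x ^ 2 := by have := s.2; positivity
  have hA : 1 - x ^ 2 / (1 + x ^ 2) = 1 / (1 + x ^ 2) := by field_simp; ring
  have hB : 1 + ((s : ℝ) - 1) * (x ^ 2 / (1 + x ^ 2)) = (1 + (s : ℝ) * x ^ 2) / (1 + x ^ 2) := by
    field_simp; ring
  rw [hA, hB]
  rw [div_div_div_cancel_right₀]
  · exact one_div _
  · exact h1.ne'

lemma integrable_comp_psiI (f : C(I, ℝ)) (μ : Measure ℝ) [IsFiniteMeasure μ] :
    Integrable (fun x => f (psiI x)) μ := by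
  refine Integrable.mono' (integrable_const ‖f‖)
    ((f.continuous.comp psiI_continuous).aestronglyMeasurable) ?_
  filter_upwards with x
  exact f.norm_coe_le_norm (psiI x)


lemma lap_key_ext (μ μ' : Measure ℝ) [IsProbabilityMeasure μ] [IsProbabilityMeasure μ']
    (h : ∀ s : ℝ, 0 < s → ∫ x, (1 + s * x ^ 2)⁻¹ ∂μ = ∫ x, (1 + s * x ^ 2)⁻¹ ∂μ')
    (f : C(I, ℝ)) : ∫ x, f (psiI x) ∂μ = ∫ x, f (psiI x) ∂μ' := by
  set F : C(I, ℝ) → ℝ := fun g => (∫ x, g (psiI x) ∂μ) - ∫ x, g (psiI x) ∂μ' with hF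
  have hbnd : ∀ (ν : Measure ℝ), IsProbabilityMeasure ν → ∀ g1 g2 : C(I, ℝ),
      ‖(∫ x, g1 (psiI x) ∂ν) - ∫ x, g2 (psiI x) ∂ν‖ ≤ ‖g1 - g2‖ := by
    intro ν hν g1 g2
    rw [← integral_sub (integrable_comp_psiI g1 ν) (integrable_comp_psiI g2 ν)]
    have hle : ∀ᵐ x ∂ν, ‖g1 (psiI x) - g2 (psiI x)‖ ≤ ‖g1 - g2‖ := by
      filter_upwards with x
      have := (g1 - g2).norm_coe_le_norm (psiI x)
      simpa [ContinuousMap.sub_apply] using this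
    calc ‖∫ x, (g1 (psiI x) - g2 (psiI x)) ∂ν‖ ≤ ‖g1 - g2‖ * (ν univ).toReal :=
          norm_integral_le_of_norm_le_const hle
      _ = ‖g1 - g2‖ := by simp [hν.measure_univ]
  have hlip : LipschitzWith 2 F := by
    apply LipschitzWith.of_dist_le_mul
    intro g1 g2
    have h1 := hbnd μ ‹_› g1 g2
    have h2 := hbnd μ' ‹_› g1 g2
    have key : F g1 - F g2 = ((∫ x, g1 (psiI x) ∂μ) - ∫ x, g2 (psiI x) ∂μ)
        - ((∫ x, g1 (psiI x) ∂μ') - ∫ x, g2 (psiI x) ∂μ') := by simp only [hF]; ring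
    have hnorm : ‖F g1 - F g2‖ ≤ ‖g1 - g2‖ + ‖g1 - g2‖ := by
      rw [key]; exact (norm_sub_le _ _).trans (add_le_add h1 h2)
    simpa [dist_eq_norm, two_mul] using hnorm
  have hS : ∀ g ∈ lapS, F g = 0 := by
    intro g hg
    induction hg using Submodule.span_induction with
    | mem x hx =>
      rcases hx with rfl | ⟨t, rfl⟩
      · simp [hF, ContinuousMap.one_apply]
      · have : ∀ (ν : Measure ℝ), (∫ x, (lapE t) (psiI x) ∂ν) = ∫ x, (1 + (t : ℝ) * x ^ 2)⁻¹ ∂ν := by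
          intro ν
          congr 1; funext x; exact lapE_comp_psiI t x
        simp only [hF, this]
        rw [h (t : ℝ) t.2]
        ring
    | zero => simp [hF, ContinuousMap.zero_apply]
    | add x y hx hy ihx ihy =>
      have hxi := integrable_comp_psiI x (μ := μ)
      have hyi := integrable_comp_psiI y (μ := μ)
      have hxi' := integrable_comp_psiI x (μ := μ')
      have hyi' := integrable_comp_psiI y (μ := μ')
      simp only [hF, ContinuousMap.add_apply] at *
      rw [integral_add hxi hyi, integral_add hxi' hyi']
      linarith
    | smul a x hx ihx =>
      simp only [hF, ContinuousMap.smul_apply, smul_eq_mul] at *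
      rw [integral_const_mul, integral_const_mul]
      linear_combination a * ihx
  have hfc : f ∈ closure (lapS : Set C(I, ℝ)) := by
    have : f ∈ lapS.topologicalClosure := by rw [lapS_dense]; trivial
    exact this
  have hclosed : IsClosed {g : C(I, ℝ) | F g = 0} := by
    have : {g : C(I, ℝ) | F g = 0} = F ⁻¹' {0} := rfl
    rw [this]
    exact IsClosed.preimage hlip.continuous isClosed_singleton
  have hsub : closure (lapS : Set C(I, ℝ)) ⊆ {g | F g = 0} :=
    closure_minimal (fun g hg => hS g hg) hclosed
  have := hsub hfc
  exact sub_eq_zero.mp this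

end LaplaceAux

theorem laplace_scale_mixtures_identifiable
    {Ω : Type*} [MeasurableSpace Ω] (P : Measure Ω) [IsProbabilityMeasure P]
    (L Y Y' : Ω → ℝ) (hLm : Measurable L) (hYm : Measurable Y) (hY'm : Measurable Y')
    (hL : ∀ t : ℝ,
      ∫ ω, Complex.exp (Complex.I * ((t * L ω : ℝ) : ℂ)) ∂P = (((1 + t ^ 2)⁻¹ : ℝ) : ℂ))
    (hYnn : ∀ᵐ ω ∂P, 0 ≤ Y ω) (hY'nn : ∀ᵐ ω ∂P, 0 ≤ Y' ω)
    (hindepY : IndepFun L Y P) (hindepY' : IndepFun L Y' P)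
    (heq : Measure.map (fun ω => L ω * Y ω) P = Measure.map (fun ω => L ω * Y' ω) P) :
    Measure.map Y P = Measure.map Y' P := by
  have hstep1 : ∀ t : ℝ, ∫ ω, (1 + t ^ 2 * Y ω ^ 2)⁻¹ ∂P = ∫ ω, (1 + t ^ 2 * Y' ω ^ 2)⁻¹ ∂P := by
    intro t
    have hY1 := char_prod P L Y hLm hYm hL hindepY t
    have hY2 := char_prod P L Y' hLm hY'm hL hindepY' t
    have hc : Continuous (fun z : ℝ => Complex.exp (Complex.I * ((t * z : ℝ) : ℂ))) := by
      fun_prop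
    have hchar : ∫ ω, Complex.exp (Complex.I * ((t * (L ω * Y ω) : ℝ) : ℂ)) ∂P
        = ∫ ω, Complex.exp (Complex.I * ((t * (L ω * Y' ω) : ℝ) : ℂ)) ∂P := by
      rw [← integral_map (φ := fun ω => L ω * Y ω) (hLm.mul hYm).aemeasurable hc.aestronglyMeasurable,
          ← integral_map (φ := fun ω => L ω * Y' ω) (hLm.mul hY'm).aemeasurable hc.aestronglyMeasurable, heq]
    rw [hY1, hY2] at hchar
    exact_mod_cast hchar
  set μ := P.map Y with hμdef
  set μ' := P.map Y' with hμ'def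
  haveI hμi : IsProbabilityMeasure μ := Measure.isProbabilityMeasure_map hYm.aemeasurable
  haveI hμ'i : IsProbabilityMeasure μ' := Measure.isProbabilityMeasure_map hY'm.aemeasurable
  have hcont : ∀ s : ℝ, Continuous (fun x : ℝ => (1 + s * x ^ 2)⁻¹) → True := fun _ _ => trivial
  have hμeq : ∀ s : ℝ, 0 < s → ∫ x, (1 + s * x ^ 2)⁻¹ ∂μ = ∫ x, (1 + s * x ^ 2)⁻¹ ∂μ' := by
    intro s hs
    have hcs : Continuous (fun x : ℝ => (1 + s * x ^ 2)⁻¹) := by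
      apply Continuous.inv₀ (by fun_prop)
      intro x; positivity
    rw [hμdef, hμ'def, integral_map hYm.aemeasurable hcs.aestronglyMeasurable,
        integral_map hY'm.aemeasurable hcs.aestronglyMeasurable]
    have ht : (Real.sqrt s) ^ 2 = s := Real.sq_sqrt hs.le
    have h := hstep1 (Real.sqrt s)
    rw [ht] at h
    exact h
  have hext : ∀ f : C(I, ℝ), ∫ x, f (psiI x) ∂μ = ∫ x, f (psiI x) ∂μ' :=
    lap_key_ext μ μ' hμeq
  have hneg : μ (Iio 0) = 0 := by
    rw [hμdef, Measure.map_apply hYm measurableSet_Iio]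
    have h0 := ae_iff.mp hYnn
    have hset : Y ⁻¹' (Iio 0) = {ω | ¬ 0 ≤ Y ω} := by ext ω; simp [not_le]
    rw [hset]; exact h0
  have hneg' : μ' (Iio 0) = 0 := by
    rw [hμ'def, Measure.map_apply hY'm measurableSet_Iio]
    have h0 := ae_iff.mp hY'nn
    have hset : Y' ⁻¹' (Iio 0) = {ω | ¬ 0 ≤ Y' ω} := by ext ω; simp [not_le]
    rw [hset]; exact h0
  have hIcc : ∀ c : ℝ, 0 ≤ c → μ (Icc (-c) c) = μ' (Icc (-c) c) := by
    intro c hc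
    set b : ℝ := c ^ 2 / (1 + c ^ 2) with hb
    have hgc : ∀ n : ℕ, Continuous (fun u : I => min 1 (max 0 (1 - (n : ℝ) * ((u : ℝ) - b)))) := by
      intro n
      apply Continuous.min continuous_const
      apply Continuous.max continuous_const
      fun_prop
    set g : ℕ → C(I, ℝ) := fun n => ⟨_, hgc n⟩ with hgdef
    have hg_apply : ∀ n (u : I), g n u = min 1 (max 0 (1 - (n : ℝ) * ((u : ℝ) - b))) :=
      fun n u => rfl
    have hmem_iff : ∀ x : ℝ, ((psiI x : ℝ) ≤ b ↔ x ∈ Icc (-c) c) := by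
      intro x
      have h1 : (0:ℝ) < 1 + x ^ 2 := by positivity
      have h2 : (0:ℝ) < 1 + c ^ 2 := by positivity
      have hψ : ((psiI x : ℝ)) = x ^ 2 / (1 + x ^ 2) := rfl
      rw [hψ, hb, div_le_div_iff₀ h1 h2]
      constructor
      · intro hx
        have hx2 : x ^ 2 ≤ c ^ 2 := by nlinarith
        constructor
        · nlinarith [sq_nonneg (x + c)]
        · nlinarith [sq_nonneg (x - c)]
      · intro hx
        have := hx.1; have := hx.2
        nlinarith
    have hptw : ∀ x : ℝ, Tendsto (fun n => g n (psiI x)) atTop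
        (𝓝 ((Icc (-c) c).indicator (fun _ => (1:ℝ)) x)) := by
      intro x
      by_cases hx : x ∈ Icc (-c) c
      · have hψb : (psiI x : ℝ) ≤ b := (hmem_iff x).mpr hx
        have hone : ∀ n : ℕ, g n (psiI x) = 1 := by
          intro n
          rw [hg_apply]
          have hnn : (0:ℝ) ≤ (n:ℝ) * (b - (psiI x : ℝ)) :=
            mul_nonneg (Nat.cast_nonneg n) (sub_nonneg.mpr hψb)
          have h1' : (1:ℝ) ≤ 1 - (n:ℝ) * ((psiI x : ℝ) - b) := by nlinarith
          rw [min_eq_left (le_trans h1' (le_max_right _ _))]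
        rw [indicator_of_mem hx]
        simp_rw [hone]
        exact tendsto_const_nhds
      · have hψb : b < (psiI x : ℝ) := lt_of_not_ge (fun hle => hx ((hmem_iff x).mp hle))
        rw [indicator_of_notMem hx]
        have hpos : 0 < (psiI x : ℝ) - b := sub_pos.mpr hψb
        have hev : ∀ᶠ n : ℕ in atTop, g n (psiI x) = 0 := by
          filter_upwards [eventually_ge_atTop ⌈((psiI x : ℝ) - b)⁻¹⌉₊] with n hn
          rw [hg_apply]
          have h1n : ((psiI x : ℝ) - b)⁻¹ ≤ (n : ℝ) :=
            le_trans (Nat.le_ceil _) (by exact_mod_cast hn)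
          have hmul : 1 ≤ (n:ℝ) * ((psiI x : ℝ) - b) := by
            have := mul_le_mul_of_nonneg_right h1n hpos.le
            rwa [inv_mul_cancel₀ hpos.ne'] at this
          have hle0 : 1 - (n:ℝ) * ((psiI x : ℝ) - b) ≤ 0 := by linarith
          rw [max_eq_left hle0, min_eq_right (by norm_num : (0:ℝ) ≤ 1)]
        exact Tendsto.congr' (hev.mono fun n h => h.symm) tendsto_const_nhds
    have hdct : ∀ (ν : Measure ℝ), IsProbabilityMeasure ν →
        Tendsto (fun n => ∫ x, g n (psiI x) ∂ν) atTop
          (𝓝 (∫ x, (Icc (-c) c).indicator (fun _ => (1:ℝ)) x ∂ν)) := by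
      intro ν hν
      apply tendsto_integral_of_dominated_convergence (fun _ => (1:ℝ))
      · intro n
        exact ((g n).continuous.comp psiI_continuous).aestronglyMeasurable
      · exact integrable_const 1
      · intro n
        filter_upwards with x
        rw [hg_apply, Real.norm_eq_abs, abs_le]
        constructor
        · have : (0:ℝ) ≤ max 0 (1 - (n:ℝ) * ((psiI x : ℝ) - b)) := le_max_left _ _
          have := le_min (by norm_num : (-1:ℝ) ≤ 1) (by linarith : (-1:ℝ) ≤ max 0 (1 - (n:ℝ) * ((psiI x : ℝ) - b)))
          exact this
        · exact min_le_left _ _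
      · filter_upwards with x
        exact hptw x
    have hind : ∀ (ν : Measure ℝ),
        ∫ x, (Icc (-c) c).indicator (fun _ => (1:ℝ)) x ∂ν = (ν (Icc (-c) c)).toReal := by
      intro ν
      rw [integral_indicator_const (1:ℝ) measurableSet_Icc]
      simp
      rfl
    have t1 := hdct μ hμi
    have t2 := hdct μ' hμ'i
    rw [hind μ] at t1
    rw [hind μ'] at t2
    have hseq_eq : ∀ n, ∫ x, g n (psiI x) ∂μ = ∫ x, g n (psiI x) ∂μ' := fun n => hext (g n)
    have huniq := tendsto_nhds_unique (Tendsto.congr hseq_eq t1) t2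
    exact (ENNReal.toReal_eq_toReal_iff' (measure_ne_top _ _) (measure_ne_top _ _)).mp huniq
  have hIic : ∀ c : ℝ, μ (Iic c) = μ' (Iic c) := by
    intro c
    rcases lt_or_ge c 0 with hc | hc
    · have h1 : μ (Iic c) = 0 :=
        measure_mono_null (fun x hx => lt_of_le_of_lt hx hc) hneg
      have h2 : μ' (Iic c) = 0 :=
        measure_mono_null (fun x hx => lt_of_le_of_lt hx hc) hneg'
      rw [h1, h2]
    · have key : ∀ (ν : Measure ℝ), ν (Iio 0) = 0 → ν (Iic c) = ν (Icc (-c) c) := by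
        intro ν hν
        apply le_antisymm
        · have hsub : Iic c ⊆ Iio (-c) ∪ Icc (-c) c := by
            intro x hx
            rcases lt_or_ge x (-c) with h | h
            · exact Or.inl h
            · exact Or.inr ⟨h, hx⟩
          calc ν (Iic c) ≤ ν (Iio (-c) ∪ Icc (-c) c) := measure_mono hsub
            _ ≤ ν (Iio (-c)) + ν (Icc (-c) c) := measure_union_le _ _
            _ = ν (Icc (-c) c) := by
                have h0 : ν (Iio (-c)) = 0 := by
                  apply measure_mono_null _ hν
                  intro x hx
                  have hx' : x < -c := hx
                  show x < 0
                  linarith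
                rw [h0, zero_add]
        · exact measure_mono (fun x hx => hx.2)
      rw [key μ hneg, key μ' hneg', hIcc c hc]
  exact Measure.ext_of_Iic μ μ' hIic
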